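/- Let Φ ∈ ℝ^{m×n} and y ∈ ℝᵐ with y ≠ 0, and define s(x) = 2(Φx)ᵀy / (‖Φx‖₂² + ‖y‖₂²). Then for every v ∈ ℝⁿ, the gradient of s satisfies ‖∇s(v)‖₂ ≤ (√2 + 1) ‖Φ‖₂ / ‖y‖₂, where ‖Φ‖₂ is the spectral (operator) norm of Φ. -/

import Mathlib

open Matrix
open scoped InnerProductSpace

set_option maxHeartbeats 1000000 in
/-- For `s(x) = 2(Φx)ᵀy/(‖Φx‖² + ‖y‖²)` with `y ≠ 0`, the gradient of `s` satisfies
`‖∇s(v)‖ ≤ (√2 + 1)‖Φ‖₂/‖y‖` for every `v`, where `‖Φ‖₂` is the spectral norm. -/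
theorem grad_s_bound {m n : ℕ} (Φ : Matrix (Fin m) (Fin n) ℝ)
    (y : EuclideanSpace ℝ (Fin m)) (hy : y ≠ 0) (v : EuclideanSpace ℝ (Fin n)) :
    ‖gradient (fun x : EuclideanSpace ℝ (Fin n) =>
        2 * ⟪Matrix.toEuclideanLin Φ x, y⟫_ℝ / (‖Matrix.toEuclideanLin Φ x‖ ^ 2 + ‖y‖ ^ 2)) v‖
      ≤ (Real.sqrt 2 + 1) * ‖(Matrix.toEuclideanLin Φ).toContinuousLinearMap‖ / ‖y‖ := by
  set A : EuclideanSpace ℝ (Fin n) →L[ℝ] EuclideanSpace ℝ (Fin m) :=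
    (Matrix.toEuclideanLin Φ).toContinuousLinearMap with hA
  have hAapp : ∀ x, Matrix.toEuclideanLin Φ x = A x := fun x => rfl
  have ha : (0:ℝ) < ‖y‖ := norm_pos_iff.mpr hy
  set a : ℝ := ‖y‖ with ha'
  set t : ℝ := ‖A v‖ with ht'
  have ht0 : (0:ℝ) ≤ t := norm_nonneg _
  set K : ℝ := ‖A‖ with hK'
  have hK0 : (0:ℝ) ≤ K := norm_nonneg _
  set Dv : ℝ := t ^ 2 + a ^ 2 with hDv'
  have hDv0 : (0:ℝ) < Dv := by positivity
  -- derivative of numerator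
  set N' : EuclideanSpace ℝ (Fin n) →L[ℝ] ℝ := (2:ℝ) • ((innerSL ℝ y).comp A) with hN'
  have hN : HasFDerivAt (fun x : EuclideanSpace ℝ (Fin n) => 2 * ⟪A x, y⟫_ℝ) N' v := by
    have heq : (fun x : EuclideanSpace ℝ (Fin n) => 2 * ⟪A x, y⟫_ℝ) = fun x => N' x := by
      funext x
      simp only [hN', ContinuousLinearMap.smul_apply, ContinuousLinearMap.coe_comp',
        Function.comp_apply, innerSL_apply_apply, smul_eq_mul]
      rw [real_inner_comm]
    rw [heq]
    exact N'.hasFDerivAt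
  -- derivative of denominator
  set D' : EuclideanSpace ℝ (Fin n) →L[ℝ] ℝ := (2:ℝ) • ((innerSL ℝ (A v)).comp A) with hD'
  have hD : HasFDerivAt (fun x : EuclideanSpace ℝ (Fin n) => ‖A x‖ ^ 2 + ‖y‖ ^ 2) D' v := by
    have h1 : HasFDerivAt (fun x : EuclideanSpace ℝ (Fin n) => ⟪A x, A x⟫_ℝ)
        ((fderivInnerCLM ℝ (A v, A v)).comp (A.prod A)) v :=
      (A.hasFDerivAt).inner ℝ (A.hasFDerivAt)
    have h2 : (fun x : EuclideanSpace ℝ (Fin n) => ‖A x‖ ^ 2 + ‖y‖ ^ 2)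
        = fun x => ⟪A x, A x⟫_ℝ + ‖y‖ ^ 2 := by
      funext x; rw [real_inner_self_eq_norm_sq]
    rw [h2]
    have h3 := h1.add_const (‖y‖ ^ 2)
    refine h3.congr_fderiv ?_
    refine ContinuousLinearMap.ext fun h => ?_
    simp only [hD', ContinuousLinearMap.smul_apply, ContinuousLinearMap.coe_comp',
      Function.comp_apply, innerSL_apply_apply, smul_eq_mul, ContinuousLinearMap.add_apply,
      ContinuousLinearMap.prod_apply, fderivInnerCLM_apply]
    rw [real_inner_comm (A h) (A v)]
    ring
  -- derivative of quotient
  set Nv : ℝ := 2 * ⟪A v, y⟫_ℝ with hNv'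
  set f' : EuclideanSpace ℝ (Fin n) →L[ℝ] ℝ :=
    Nv • ((-(Dv ^ 2)⁻¹) • D') + (Dv)⁻¹ • N' with hf'
  have hInv : HasFDerivAt (fun x : EuclideanSpace ℝ (Fin n) => (‖A x‖ ^ 2 + ‖y‖ ^ 2)⁻¹)
      ((-(Dv ^ 2)⁻¹) • D') v := by
    have h5 := (hasDerivAt_inv hDv0.ne').comp_hasFDerivAt v hD
    exact h5
  have hf : HasFDerivAt (fun x : EuclideanSpace ℝ (Fin n) =>
      2 * ⟪A x, y⟫_ℝ * (‖A x‖ ^ 2 + ‖y‖ ^ 2)⁻¹) f' v := hN.mul hInv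
  have hfun : (fun x : EuclideanSpace ℝ (Fin n) =>
        2 * ⟪Matrix.toEuclideanLin Φ x, y⟫_ℝ / (‖Matrix.toEuclideanLin Φ x‖ ^ 2 + ‖y‖ ^ 2))
      = fun x => 2 * ⟪A x, y⟫_ℝ * (‖A x‖ ^ 2 + ‖y‖ ^ 2)⁻¹ := by
    funext x; rw [hAapp x, div_eq_mul_inv]
  rw [hfun]
  have hgrad : ‖gradient (fun x : EuclideanSpace ℝ (Fin n) =>
      2 * ⟪A x, y⟫_ℝ * (‖A x‖ ^ 2 + ‖y‖ ^ 2)⁻¹) v‖ = ‖f'‖ := by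
    rw [gradient, hf.fderiv]
    exact (InnerProductSpace.toDual ℝ _).symm.norm_map f'
  rw [hgrad]
  -- scalar inequality
  have hs : Real.sqrt 2 ≥ 5/4 := by
    nlinarith [Real.sq_sqrt (by norm_num : (0:ℝ) ≤ 2), Real.sqrt_nonneg 2]
  have key : 2 * t * a * ((Dv ^ 2)⁻¹ * (2 * (t * (K * 1)))) + Dv⁻¹ * (2 * (a * (K * 1)))
      ≤ (Real.sqrt 2 + 1) * K / a := by
    have hrw : 2 * t * a * ((Dv ^ 2)⁻¹ * (2 * (t * (K * 1)))) + Dv⁻¹ * (2 * (a * (K * 1)))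
        = ((4 * t^2 * a + 2 * a * Dv) * K) / Dv ^ 2 := by
      field_simp
      ring
    rw [hrw, div_le_div_iff₀ (by positivity) ha, hDv']
    nlinarith [mul_nonneg hK0 (sq_nonneg (3*t^2 - a^2)),
      mul_nonneg (mul_nonneg (by linarith : (0:ℝ) ≤ Real.sqrt 2 - 5/4) hK0) (sq_nonneg (t^2 + a^2))]
  -- now bound the operator norm
  refine ContinuousLinearMap.opNorm_le_bound f' (by positivity) ?_
  intro h
  have hAh : ‖A h‖ ≤ K * ‖h‖ := A.le_opNorm h
  have hfh : f' h = Nv * (-(Dv ^ 2)⁻¹ * (2 * ⟪A v, A h⟫_ℝ)) + Dv⁻¹ * (2 * ⟪y, A h⟫_ℝ) := by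
    simp only [hf', ContinuousLinearMap.add_apply, ContinuousLinearMap.smul_apply, hN', hD',
      ContinuousLinearMap.coe_comp', Function.comp_apply, innerSL_apply_apply, smul_eq_mul]
  have hNvb : |Nv| ≤ 2 * t * a := by
    rw [hNv', abs_mul, abs_two]
    have hb := abs_real_inner_le_norm (A v) y
    linarith
  have h1 : |⟪A v, A h⟫_ℝ| ≤ t * (K * ‖h‖) :=
    (abs_real_inner_le_norm (A v) (A h)).trans (by gcongr)
  have h2 : |⟪y, A h⟫_ℝ| ≤ a * (K * ‖h‖) :=
    (abs_real_inner_le_norm y (A h)).trans (by gcongr)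
  have step : ‖f' h‖ ≤ 2 * t * a * ((Dv ^ 2)⁻¹ * (2 * (t * (K * ‖h‖))))
      + Dv⁻¹ * (2 * (a * (K * ‖h‖))) := by
    rw [hfh, Real.norm_eq_abs]
    refine (abs_add_le _ _).trans (add_le_add ?_ ?_)
    · have e1 : |Nv * (-(Dv ^ 2)⁻¹ * (2 * ⟪A v, A h⟫_ℝ))|
          = |Nv| * ((Dv ^ 2)⁻¹ * (2 * |⟪A v, A h⟫_ℝ|)) := by
        simp only [abs_mul, abs_neg, abs_inv, abs_pow, abs_of_pos hDv0, abs_two]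
        all_goals ring
      rw [e1]
      gcongr <;> first | exact hNvb | exact h1 | positivity
    · have e2 : |Dv⁻¹ * (2 * ⟪y, A h⟫_ℝ)| = Dv⁻¹ * (2 * |⟪y, A h⟫_ℝ|) := by
        simp only [abs_mul, abs_inv, abs_of_pos hDv0, abs_two]
      rw [e2]
      gcongr <;> first | exact h2 | positivity
  refine step.trans ?_
  have hexp : 2 * t * a * ((Dv ^ 2)⁻¹ * (2 * (t * (K * ‖h‖))))
      + Dv⁻¹ * (2 * (a * (K * ‖h‖)))
      = (2 * t * a * ((Dv ^ 2)⁻¹ * (2 * (t * (K * 1)))) + Dv⁻¹ * (2 * (a * (K * 1)))) * ‖h‖ := by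
    ring
  rw [hexp]
  exact mul_le_mul_of_nonneg_right key (norm_nonneg h)
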